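/- Let T be an infinitely splitting ω₁-tree in which every node has extensions to all higher levels. Then T is a Suslin tree if and only if for every dense, open subset E ⊆ T there exists β < ω₁ such that the entire level T_β is contained in E. -/

import Mathlib

noncomputable section

open Cardinal Ordinal Set

/-- The height of a node of a tree. -/
noncomputable def treeHt {T : Type*} [PartialOrder T]
    (hwo : ∀ t : T, IsWellOrder {s : T // s < t} (fun a b => (a : T) < (b : T)))
    (t : T) : Ordinal :=
  @Ordinal.type {s : T // s < t} (fun a b => (a : T) < (b : T)) (hwo t)

/-- `ω₁` as an ordinal. -/
noncomputable def w1 : Ordinal := (Cardinal.aleph 1).ord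

section Aux

variable {T : Type*} [PartialOrder T]
  (hwo : ∀ t : T, IsWellOrder {s : T // s < t} (fun a b => (a : T) < (b : T)))

lemma treeHt_eq_typein {s t : T} (h : s < t) :
    treeHt hwo s =
      @Ordinal.typein {x : T // x < t} (fun a b => (a : T) < (b : T)) (hwo t) ⟨s, h⟩ := by
  rw [← @Ordinal.type_subrel _ _ (hwo t) ⟨s, h⟩]
  exact Ordinal.type_eq.2 ⟨⟨⟨fun x => ⟨⟨x.1, lt_trans x.2 h⟩, x.2⟩, fun b => ⟨b.1.1, b.2⟩,
    fun x => rfl, fun b => rfl⟩, Iff.rfl⟩⟩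

lemma treeHt_lt_of_lt {s t : T} (h : s < t) : treeHt hwo s < treeHt hwo t := by
  rw [treeHt_eq_typein hwo h]
  exact Ordinal.typein_lt_type _ _

lemma treeHt_le_of_le {s t : T} (h : s ≤ t) : treeHt hwo s ≤ treeHt hwo t := by
  rcases h.lt_or_eq with h | rfl
  · exact (treeHt_lt_of_lt hwo h).le
  · exact le_rfl

lemma exists_le_level {t : T} {β : Ordinal} (h : β ≤ treeHt hwo t) :
    ∃ s : T, s ≤ t ∧ treeHt hwo s = β := by
  rcases h.lt_or_eq with h | h
  · obtain ⟨a, ha⟩ := @Ordinal.typein_surj {x : T // x < t}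
      (fun a b => (a : T) < (b : T)) (hwo t) β h
    exact ⟨a.1, a.2.le, (treeHt_eq_typein hwo a.2).trans ha⟩
  · exact ⟨t, le_rfl, h.symm⟩

include hwo in
lemma comparable_of_le {a b t : T} (ha : a ≤ t) (hb : b ≤ t) : a ≤ b ∨ b ≤ a := by
  rcases eq_or_lt_of_le ha with rfl | ha'
  · exact Or.inr hb
  rcases eq_or_lt_of_le hb with rfl | hb'
  · exact Or.inl ha'.le
  rcases @trichotomous _ _ (hwo t).toTrichotomous ⟨a, ha'⟩ ⟨b, hb'⟩ with h | h | h
  · exact Or.inl (le_of_lt h)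
  · exact Or.inl (le_of_eq (congrArg Subtype.val h))
  · exact Or.inr (le_of_lt h)

lemma eq_of_le_of_ht_eq {a b t : T} (ha : a ≤ t) (hb : b ≤ t)
    (h : treeHt hwo a = treeHt hwo b) : a = b := by
  rcases comparable_of_le hwo ha hb with h' | h'
  · rcases h'.lt_or_eq with h' | h'
    · exact absurd h (treeHt_lt_of_lt hwo h').ne
    · exact h'
  · rcases h'.lt_or_eq with h' | h'
    · exact absurd h.symm (treeHt_lt_of_lt hwo h').ne
    · exact h'.symm

lemma exists_maximal_antichain (E A0 : Set T) (hA0E : A0 ⊆ E)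
    (hA0 : ∀ a ∈ A0, ∀ b ∈ A0, a ≠ b → ¬a ≤ b ∧ ¬b ≤ a) :
    ∃ A, A0 ⊆ A ∧ A ⊆ E ∧ (∀ a ∈ A, ∀ b ∈ A, a ≠ b → ¬a ≤ b ∧ ¬b ≤ a) ∧
      ∀ x ∈ E, ∃ a ∈ A, a ≤ x ∨ x ≤ a := by
  have hz : ∀ c ⊆ {A : Set T | A ⊆ E ∧ ∀ a ∈ A, ∀ b ∈ A, a ≠ b → ¬a ≤ b ∧ ¬b ≤ a},
      IsChain (· ⊆ ·) c → c.Nonempty →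
      ∃ ub ∈ {A : Set T | A ⊆ E ∧ ∀ a ∈ A, ∀ b ∈ A, a ≠ b → ¬a ≤ b ∧ ¬b ≤ a},
        ∀ s ∈ c, s ⊆ ub := by
    intro c hcS hchain hcne
    refine ⟨⋃₀ c, ⟨sUnion_subset fun s hs => (hcS hs).1, ?_⟩, fun s hs => subset_sUnion_of_mem hs⟩
    rintro a ⟨s1, hs1, ha⟩ b ⟨s2, hs2, hb⟩ hne
    rcases hchain.total hs1 hs2 with h | h
    · exact (hcS hs2).2 a (h ha) b hb hne
    · exact (hcS hs1).2 a ha b (h hb) hne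
  obtain ⟨m, hm0, hmax⟩ := zorn_subset_nonempty
    {A : Set T | A ⊆ E ∧ ∀ a ∈ A, ∀ b ∈ A, a ≠ b → ¬a ≤ b ∧ ¬b ≤ a} hz A0 ⟨hA0E, hA0⟩
  · obtain ⟨hmE, hmA⟩ := hmax.1
    refine ⟨m, hm0, hmE, hmA, ?_⟩
    intro x hx
    by_contra hcon
    push_neg at hcon
    have hxm : x ∉ m := fun h => (hcon x h).1 le_rfl
    have hins : insert x m ∈ {A : Set T | A ⊆ E ∧ ∀ a ∈ A, ∀ b ∈ A, a ≠ b → ¬a ≤ b ∧ ¬b ≤ a} := by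
      refine ⟨insert_subset hx hmE, ?_⟩
      intro a ha b hb hne
      rcases mem_insert_iff.1 ha with rfl | ha2
      · rcases mem_insert_iff.1 hb with rfl | hb2
        · exact absurd rfl hne
        · exact ⟨(hcon b hb2).2, (hcon b hb2).1⟩
      · rcases mem_insert_iff.1 hb with rfl | hb2
        · exact ⟨(hcon a ha2).1, (hcon a ha2).2⟩
        · exact hmA a ha2 b hb2 hne
    have := hmax.2 hins (subset_insert x m)
    exact hxm (this (mem_insert x m))

lemma sup_ht_lt (hht : ∀ t : T, treeHt hwo t < w1) (A : Set T) (hA : A.Countable) :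
    ∃ β < w1, ∀ a ∈ A, treeHt hwo a < β := by
  have : Countable ↥A := hA.to_subtype
  refine ⟨⨆ a : A, (treeHt hwo a.1 + 1), ?_, ?_⟩
  · have hw : w1 = ω_ 1 := by rw [w1, Cardinal.ord_aleph]
    rw [hw]
    exact Ordinal.iSup_lt_omega_one (fun a => by
      rw [← hw, Ordinal.add_one_eq_succ]
      exact (Cardinal.isSuccLimit_ord (aleph0_le_aleph 1)).succ_lt (hht a.1))
  · intro a ha
    calc treeHt hwo a < treeHt hwo a + 1 := by
          rw [Ordinal.add_one_eq_succ]; exact Order.lt_succ _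
      _ ≤ _ := Ordinal.le_iSup (fun a : A => treeHt hwo a.1 + 1) ⟨a, ha⟩

end Aux

/-- An infinitely splitting `ω₁`-tree `T` in which every node has extensions
to all higher levels is Suslin (no uncountable branches/chains, no uncountable antichains)
if and only if every dense open subset `E ⊆ T` contains a full level `T_β` for
some `β < ω₁`. -/
theorem suslin_iff_dense_open_contains_level {T : Type*} [PartialOrder T]
    (hwo : ∀ t : T, IsWellOrder {s : T // s < t} (fun a b => (a : T) < (b : T)))
    -- `T` is an `ω₁`-tree:
    (hht : ∀ t : T, treeHt hwo t < w1)
    (hlevels_countable : ∀ α < w1, Set.Countable {t : T | treeHt hwo t = α})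
    (hlevels_ne : ∀ α < w1, ∃ t : T, treeHt hwo t = α)
    -- every node has extensions to all higher levels:
    (hext : ∀ α β : Ordinal, α < β → β < w1 →
      ∀ t : T, treeHt hwo t = α → ∃ s : T, treeHt hwo s = β ∧ t < s)
    -- `T` is infinitely splitting:
    (hsplit : ∀ t : T, {s : T | t < s ∧ treeHt hwo s = treeHt hwo t + 1}.Infinite) :
    -- `T` is Suslin ...
    ((∀ C : Set T, IsChain (· ≤ ·) C → C.Countable) ∧
     (∀ A : Set T, (∀ a ∈ A, ∀ b ∈ A, a ≠ b → ¬ a ≤ b ∧ ¬ b ≤ a) → A.Countable))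
    ↔
    -- ... iff every dense open subset contains a full level:
    (∀ E : Set T, (∀ t : T, ∃ s ∈ E, t ≤ s) → (∀ t ∈ E, ∀ s : T, t ≤ s → s ∈ E) →
      ∃ β < w1, ∀ t : T, treeHt hwo t = β → t ∈ E) := by
  constructor
  · rintro ⟨hchain, hanti⟩ E hdense hopen
    obtain ⟨A, -, hAE, hA, hAmax⟩ := exists_maximal_antichain E ∅ (empty_subset E) (by simp)
    have hAc : A.Countable := hanti A hA
    obtain ⟨β, hβ, hβ2⟩ := sup_ht_lt hwo hht A hAc
    refine ⟨β, hβ, fun t ht => ?_⟩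
    obtain ⟨s, hsE, hts⟩ := hdense t
    obtain ⟨a, haA, hcomp⟩ := hAmax s hsE
    have haβ : treeHt hwo a < β := hβ2 a haA
    have has : a ≤ s := by
      rcases hcomp with h | h
      · exact h
      · exfalso
        have h2 := treeHt_le_of_le hwo (hts.trans h)
        rw [ht] at h2
        exact absurd h2 (not_le.2 haβ)
    rcases comparable_of_le hwo has hts with h | h
    · exact hopen a (hAE haA) t h
    · exfalso
      have h2 := treeHt_le_of_le hwo h
      rw [ht] at h2
      exact absurd h2 (not_le.2 haβ)
  · intro H
    have hanti : ∀ A : Set T, (∀ a ∈ A, ∀ b ∈ A, a ≠ b → ¬a ≤ b ∧ ¬b ≤ a) → A.Countable := by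
      intro A hA
      obtain ⟨A', hAA', -, hA', hmax⟩ := exists_maximal_antichain univ A (subset_univ A) hA
      set E0 : Set T := {t | ∃ a ∈ A', a ≤ t} with hE0
      have hdense : ∀ t : T, ∃ s ∈ E0, t ≤ s := by
        intro t
        obtain ⟨a, ha, h | h⟩ := hmax t (mem_univ t)
        · exact ⟨t, ⟨a, ha, h⟩, le_rfl⟩
        · exact ⟨a, ⟨a, ha, le_rfl⟩, h⟩
      have hopen : ∀ t ∈ E0, ∀ s, t ≤ s → s ∈ E0 := by
        rintro t ⟨a, ha, hat⟩ s hts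
        exact ⟨a, ha, hat.trans hts⟩
      obtain ⟨β, hβ, hlev⟩ := H E0 hdense hopen
      have key : ∀ a ∈ A', ∃ t, treeHt hwo t = β ∧ a ≤ t := by
        intro a ha
        rcases lt_trichotomy (treeHt hwo a) β with h | h | h
        · obtain ⟨s, hs, has⟩ := hext _ _ h hβ a rfl
          exact ⟨s, hs, has.le⟩
        · exact ⟨a, h, le_rfl⟩
        · obtain ⟨p, hpa, hp⟩ := exists_le_level hwo h.le
          obtain ⟨a', ha', ha'p⟩ := hlev p hp
          have heq : a' = a := by
            by_contra hne
            exact (hA' a' ha' a ha hne).1 (ha'p.trans hpa)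
          have hap : a = p := le_antisymm (heq ▸ ha'p) hpa
          rw [← hap] at hp
          exact absurd hp h.ne'
      choose f hf1 hf2 using key
      have hA'c : A'.Countable := by
        classical
        refine MapsTo.countable_of_injOn (s := A') (t := {t : T | treeHt hwo t = β})
          (f := fun a => if h : a ∈ A' then f a h else a) ?_ ?_ (hlevels_countable β hβ)
        · intro a ha
          simp only [ha, dif_pos]
          exact hf1 a ha
        · intro a ha b hb hgab
          simp only [ha, hb, dif_pos] at hgab
          by_contra hne
          rcases comparable_of_le hwo (hf2 a ha) (hgab ▸ hf2 b hb) with h | h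
          · exact (hA' a ha b hb hne).1 h
          · exact (hA' a ha b hb hne).2 h
      exact hA'c.mono hAA'
    refine ⟨?_, hanti⟩
    intro C hC
    set C' := {c ∈ C | ∃ d ∈ C, c < d} with hC'def
    have hC'sub : C' ⊆ C := fun x hx => hx.1
    have hss : (C \ C').Subsingleton := by
      intro x hx y hy
      by_contra hne
      rcases hC.total hx.1 hy.1 with h | h
      · exact hx.2 ⟨hx.1, y, hy.1, lt_of_le_of_ne h hne⟩
      · exact hy.2 ⟨hy.1, x, hx.1, lt_of_le_of_ne h (Ne.symm hne)⟩
    suffices hC'c : C'.Countable by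
      have hcc : C = C' ∪ (C \ C') := (union_diff_cancel hC'sub).symm
      rw [hcc]
      exact hC'c.union hss.countable
    have hd : ∀ c ∈ C', ∃ d, d ∈ C ∧ c < d := fun c hc => hc.2
    choose d hd1 hd2 using hd
    have hp : ∀ c (hc : c ∈ C'), ∃ p, p ≤ d c hc ∧ treeHt hwo p = treeHt hwo c + 1 := by
      intro c hc
      apply exists_le_level hwo
      rw [Ordinal.add_one_eq_succ, Order.succ_le_iff]
      exact treeHt_lt_of_lt hwo (hd2 c hc)
    choose p hp1 hp2 using hp
    have hs : ∀ c (hc : c ∈ C'), ∃ s, c < s ∧ treeHt hwo s = treeHt hwo c + 1 ∧ s ≠ p c hc := by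
      intro c hc
      obtain ⟨s, hsmem, hsne⟩ := ((hsplit c).diff (finite_singleton (p c hc))).nonempty
      exact ⟨s, hsmem.1, hsmem.2, by simpa using hsne⟩
    choose s hs1 hs2 hs3 using hs
    have hlt : ∀ c (hc : c ∈ C') c' (hc' : c' ∈ C'), c < c' →
        treeHt hwo (s c hc) < treeHt hwo (s c' hc') := by
      intro c hc c' hc' h
      rw [hs2 c hc, hs2 c' hc']
      calc treeHt hwo c + 1 ≤ treeHt hwo c' := by
            rw [Ordinal.add_one_eq_succ, Order.succ_le_iff]
            exact treeHt_lt_of_lt hwo h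
        _ < treeHt hwo c' + 1 := by
            rw [Ordinal.add_one_eq_succ]; exact Order.lt_succ _
    have key : ∀ c (hc : c ∈ C') c' (hc' : c' ∈ C'), c < c' → ¬ s c hc ≤ s c' hc' := by
      intro c hc c' hc' h hle
      have h1 : s c hc ≤ c' := by
        rcases comparable_of_le hwo hle (le_of_lt (hs1 c' hc')) with h1 | h1
        · exact h1
        · have e1 : treeHt hwo c' ≤ treeHt hwo (s c hc) := treeHt_le_of_le hwo h1
          have e2 : treeHt hwo (s c hc) ≤ treeHt hwo c' := by
            rw [hs2 c hc, Ordinal.add_one_eq_succ, Order.succ_le_iff]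
            exact treeHt_lt_of_lt hwo h
          exact (eq_of_le_of_ht_eq hwo h1 le_rfl (le_antisymm e1 e2)).ge
      apply hs3 c hc
      rcases hC.total hc'.1 (hd1 c hc) with h2 | h2
      · exact eq_of_le_of_ht_eq hwo (h1.trans h2) (hp1 c hc) (by rw [hs2, hp2])
      · exact eq_of_le_of_ht_eq hwo h1 ((hp1 c hc).trans h2) (by rw [hs2, hp2])
    classical
    set g : T → T := fun c => if h : c ∈ C' then s c h else c with hg
    have hgdef : ∀ c (hc : c ∈ C'), g c = s c hc := by
      intro c hc; rw [hg]; simp only [hc, dif_pos]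
    have hAanti : ∀ x ∈ g '' C', ∀ y ∈ g '' C', x ≠ y → ¬x ≤ y ∧ ¬y ≤ x := by
      rintro x ⟨c, hc, rfl⟩ y ⟨c', hc', rfl⟩ hne
      rw [hgdef c hc, hgdef c' hc'] at *
      have hcne : c ≠ c' := by rintro rfl; exact hne rfl
      rcases hC.total hc.1 hc'.1 with h | h
      · have h' : c < c' := lt_of_le_of_ne h hcne
        exact ⟨key c hc c' hc' h', fun hle =>
          absurd (treeHt_le_of_le hwo hle) (not_le.2 (hlt c hc c' hc' h'))⟩
      · have h' : c' < c := lt_of_le_of_ne h (Ne.symm hcne)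
        exact ⟨fun hle => absurd (treeHt_le_of_le hwo hle) (not_le.2 (hlt c' hc' c hc h')),
          key c' hc' c hc h'⟩
    have hAc : (g '' C').Countable := hanti _ hAanti
    refine MapsTo.countable_of_injOn (mapsTo_image g C') ?_ hAc
    intro c hc c' hc' hgcc'
    rw [hgdef c hc, hgdef c' hc'] at hgcc'
    by_contra hne
    rcases hC.total hc.1 hc'.1 with h | h
    · exact absurd (congrArg (treeHt hwo) hgcc')
        (hlt c hc c' hc' (lt_of_le_of_ne h hne)).ne
    · exact absurd (congrArg (treeHt hwo) hgcc')
        (hlt c' hc' c hc (lt_of_le_of_ne h (Ne.symm hne))).ne'
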